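/- For every prime power q and positive integer n, the sum over all matrices X in GL_n(F_q) of ψ(tr X) equals (-1)^n · q^{n(n-1)/2}, where ψ is any non-trivial additive character of F_q. -/

import Mathlib

open Finset

section aux

variable {F : Type} [Field F] [Fintype F] [DecidableEq F] (ψ : AddChar F ℂ)

private lemma trace_reindex' {m m' : Type} [Fintype m] [Fintype m'] (e : m ≃ m')
    (A : Matrix m m F) : ((Matrix.reindex e e) A).trace = A.trace := by
  rw [Matrix.reindex_apply]
  simp only [Matrix.trace, Matrix.diag, Matrix.submatrix_apply]
  exact Equiv.sum_comp e.symm fun i => A i i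

private lemma sum_isUnit_reindex {m m' : Type} [Fintype m] [Fintype m'] [DecidableEq m]
    [DecidableEq m'] (e : m ≃ m') :
    ∑ A ∈ univ.filter (fun A : Matrix m m F => IsUnit A), ψ A.trace
      = ∑ A ∈ univ.filter (fun A : Matrix m' m' F => IsUnit A), ψ A.trace := by
  refine Finset.sum_nbij' (fun A => Matrix.reindex e e A)
    (fun A => Matrix.reindex e.symm e.symm A) ?_ ?_ ?_ ?_ ?_
  · intro A hA
    simp only [mem_filter, mem_univ, true_and] at hA ⊢
    rwa [Matrix.isUnit_iff_isUnit_det, Matrix.det_reindex_self,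
      ← Matrix.isUnit_iff_isUnit_det]
  · intro A hA
    simp only [mem_filter, mem_univ, true_and] at hA ⊢
    rwa [Matrix.isUnit_iff_isUnit_det, Matrix.det_reindex_self,
      ← Matrix.isUnit_iff_isUnit_det]
  · intro A _; simp
  · intro A _; simp
  · intro A _
    rw [trace_reindex']

/-- Fibers whose first column is not supported on the `inl` coordinate contribute zero. -/
private lemma fiber_sum_zero (hψ : ψ ≠ 1) {n : ℕ} (c : (Fin 1 ⊕ Fin n) → F) (j : Fin n)
    (hj : c (Sum.inr j) ≠ 0) :
    ∑ A ∈ univ.filter (fun A : Matrix (Fin 1 ⊕ Fin n) (Fin 1 ⊕ Fin n) F =>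
        IsUnit A ∧ (fun i => A i (Sum.inl 0)) = c), ψ A.trace = 0 := by
  obtain ⟨a, ha⟩ := AddChar.ne_one_iff.mp hψ
  set s : F := a * (c (Sum.inr j))⁻¹ with hs
  set E : Matrix (Fin 1 ⊕ Fin n) (Fin 1 ⊕ Fin n) F :=
    Matrix.single (Sum.inl 0) (Sum.inr j) s with hE
  have hEE : E * E = 0 := Matrix.single_mul_single_of_ne _ _ _ _ (by simp) _
  have hUV : (1 + E) * (1 - E) = 1 := by
    have h1 : (1 + E) * (1 - E) = 1 - E * E := by noncomm_ring
    rw [h1, hEE, sub_zero]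
  have hVU : (1 - E) * (1 + E) = 1 := by
    have h1 : (1 - E) * (1 + E) = 1 - E * E := by noncomm_ring
    rw [h1, hEE, sub_zero]
  -- multiplication by (1+E) fixes the first column
  have hcolE : ∀ (A : Matrix (Fin 1 ⊕ Fin n) (Fin 1 ⊕ Fin n) F) (i),
      (A * E) i (Sum.inl 0) = 0 := by
    intro A i
    simp [Matrix.mul_apply, hE, Matrix.single]
  -- trace shift
  have htr : ∀ A ∈ univ.filter (fun A : Matrix (Fin 1 ⊕ Fin n) (Fin 1 ⊕ Fin n) F =>
      IsUnit A ∧ (fun i => A i (Sum.inl 0)) = c), (A * E).trace = a := by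
    intro A hA
    simp only [mem_filter, mem_univ, true_and] at hA
    have hcol : ∀ i, A i (Sum.inl 0) = c i := fun i => congrFun hA.2 i
    have : (A * E).trace = A (Sum.inr j) (Sum.inl 0) * s := by
      simp [Matrix.trace, Matrix.diag, Matrix.mul_apply, hE, Matrix.single,
        Finset.sum_ite_eq, Fintype.sum_sum_type]
    rw [this, hcol, hs, ← mul_assoc, mul_comm (c (Sum.inr j)) a, mul_assoc,
      mul_inv_cancel₀ hj, mul_one]
  set S := univ.filter (fun A : Matrix (Fin 1 ⊕ Fin n) (Fin 1 ⊕ Fin n) F =>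
      IsUnit A ∧ (fun i => A i (Sum.inl 0)) = c) with hS
  have hmem : ∀ A ∈ S, A * (1 + E) ∈ S ∧ A * (1 - E) ∈ S := by
    intro A hA
    simp only [hS, mem_filter, mem_univ, true_and] at hA ⊢
    obtain ⟨hAu, hAc⟩ := hA
    have hUu : IsUnit (1 + E) := ⟨⟨1 + E, 1 - E, hUV, hVU⟩, rfl⟩
    have hVu : IsUnit (1 - E) := ⟨⟨1 - E, 1 + E, hVU, hUV⟩, rfl⟩
    constructor
    · refine ⟨hAu.mul hUu, ?_⟩
      funext i
      rw [mul_add, mul_one]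
      show (A + A * E) i (Sum.inl 0) = c i
      rw [Matrix.add_apply, hcolE, add_zero]
      exact congrFun hAc i
    · refine ⟨hAu.mul hVu, ?_⟩
      funext i
      rw [mul_sub, mul_one]
      show (A - A * E) i (Sum.inl 0) = c i
      rw [Matrix.sub_apply, hcolE, sub_zero]
      exact congrFun hAc i
  have key : ∑ A ∈ S, ψ A.trace = ψ a * ∑ A ∈ S, ψ A.trace := by
    rw [Finset.mul_sum]
    refine Finset.sum_nbij' (fun A => A * (1 - E)) (fun A => A * (1 + E))
      (fun A hA => (hmem A hA).2) (fun A hA => (hmem A hA).1) ?_ ?_ ?_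
    · intro A _; show A * (1 - E) * (1 + E) = A; rw [mul_assoc, hVU, mul_one]
    · intro A _; show A * (1 + E) * (1 - E) = A; rw [mul_assoc, hUV, mul_one]
    · intro A hA
      have hmem2 := (hmem A hA).2
      have h2 : (A * (1 - E)) * (1 + E) = A := by rw [mul_assoc, hVU, mul_one]
      have htr2 : ((A * (1 - E)) * E).trace = a := htr _ hmem2
      have : A.trace = (A * (1 - E)).trace + a := by
        conv_lhs => rw [← h2]
        rw [mul_add, mul_one, Matrix.trace_add, htr2]
      rw [this, add_comm, AddChar.map_add_eq_mul]
  have hψa1 : ψ a ≠ 1 := ha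
  have := key
  have h0 : (1 - ψ a) * ∑ A ∈ S, ψ A.trace = 0 := by
    linear_combination key
  rcases mul_eq_zero.mp h0 with h | h
  · exact absurd (by linear_combination -h : ψ a = 1) hψa1
  · exact h

/-- The fiber over a column supported on the `inl` coordinate. -/
private lemma fiber_sum_scalar {n : ℕ} (t : F) :
    ∑ A ∈ univ.filter (fun A : Matrix (Fin 1 ⊕ Fin n) (Fin 1 ⊕ Fin n) F =>
        IsUnit A ∧ (fun i => A i (Sum.inl 0)) = (fun i => if i = Sum.inl 0 then t else 0)),
      ψ A.trace
    = (if t = 0 then 0 else ψ t * (Fintype.card F : ℂ) ^ n *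
        ∑ D ∈ univ.filter (fun D : Matrix (Fin n) (Fin n) F => IsUnit D), ψ D.trace) := by
  have hdec : ∀ A ∈ univ.filter (fun A : Matrix (Fin 1 ⊕ Fin n) (Fin 1 ⊕ Fin n) F =>
      IsUnit A ∧ (fun i => A i (Sum.inl 0)) = (fun i => if i = Sum.inl 0 then t else 0)),
      A = Matrix.fromBlocks (Matrix.of fun _ _ => t) A.toBlocks₁₂ 0 A.toBlocks₂₂ := by
    intro A hA
    simp only [mem_filter, mem_univ, true_and] at hA
    have hcol : ∀ i, A i (Sum.inl 0) = (if i = Sum.inl 0 then t else 0) :=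
      fun i => congrFun hA.2 i
    ext i k
    cases i with
    | inl a =>
      cases k with
      | inl b =>
        have ha0 : a = 0 := Subsingleton.elim _ _
        have hb0 : b = 0 := Subsingleton.elim _ _
        subst ha0; subst hb0
        simpa using hcol (Sum.inl 0)
      | inr b => simp [Matrix.toBlocks₁₂]
    | inr a =>
      cases k with
      | inl b =>
        have hb0 : b = 0 := Subsingleton.elim _ _
        subst hb0
        simpa using hcol (Sum.inr a)
      | inr b => simp [Matrix.toBlocks₂₂]
  by_cases ht : t = 0
  · rw [if_pos ht]
    refine Finset.sum_eq_zero fun A hA => ?_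
    exfalso
    have hA' := hA
    simp only [mem_filter, mem_univ, true_and] at hA'
    have hdet : A.det = t * A.toBlocks₂₂.det := by
      conv_lhs => rw [hdec A hA]
      rw [Matrix.det_fromBlocks_zero₂₁, Matrix.det_fin_one, Matrix.of_apply]
    have := (Matrix.isUnit_iff_isUnit_det A).mp hA'.1
    rw [hdet, ht, zero_mul] at this
    simp at this
  · rw [if_neg ht]
    have h1 : ∑ A ∈ univ.filter (fun A : Matrix (Fin 1 ⊕ Fin n) (Fin 1 ⊕ Fin n) F =>
          IsUnit A ∧ (fun i => A i (Sum.inl 0)) = (fun i => if i = Sum.inl 0 then t else 0)),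
        ψ A.trace
        = ∑ p ∈ (univ : Finset (Matrix (Fin 1) (Fin n) F)) ×ˢ
            (univ.filter (fun D : Matrix (Fin n) (Fin n) F => IsUnit D)),
          ψ (t + p.2.trace) := by
      refine Finset.sum_nbij' (fun A => (A.toBlocks₁₂, A.toBlocks₂₂))
        (fun p => Matrix.fromBlocks (Matrix.of fun _ _ => t) p.1 0 p.2) ?_ ?_ ?_ ?_ ?_
      · intro A hA
        have hA' := hA
        simp only [mem_filter, mem_univ, true_and] at hA'
        rw [Finset.mem_product, mem_filter]
        refine ⟨mem_univ _, mem_univ _, ?_⟩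
        have hdet : A.det = t * A.toBlocks₂₂.det := by
          conv_lhs => rw [hdec A hA]
          rw [Matrix.det_fromBlocks_zero₂₁, Matrix.det_fin_one, Matrix.of_apply]
        have hu := (Matrix.isUnit_iff_isUnit_det A).mp hA'.1
        rw [hdet] at hu
        rw [Matrix.isUnit_iff_isUnit_det, isUnit_iff_ne_zero]
        intro h0
        rw [h0, mul_zero] at hu
        simp at hu
      · intro p hp
        rw [Finset.mem_product, mem_filter] at hp
        simp only [mem_filter, mem_univ, true_and]
        constructor
        · rw [Matrix.isUnit_iff_isUnit_det, Matrix.det_fromBlocks_zero₂₁,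
            Matrix.det_fin_one, Matrix.of_apply, isUnit_iff_ne_zero]
          exact mul_ne_zero ht (isUnit_iff_ne_zero.mp
            ((Matrix.isUnit_iff_isUnit_det _).mp hp.2.2))
        · funext i
          cases i with
          | inl a =>
            have ha0 : a = 0 := Subsingleton.elim _ _
            subst ha0
            simp
          | inr a => simp
      · intro A hA
        exact (hdec A hA).symm
      · intro p hp
        simp [Matrix.toBlocks_fromBlocks₁₂, Matrix.toBlocks_fromBlocks₂₂]
      · intro A hA
        have hA' := hA
        simp only [mem_filter, mem_univ, true_and] at hA'
        have h00 : A (Sum.inl 0) (Sum.inl 0) = t := by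
          simpa using congrFun hA'.2 (Sum.inl 0)
        congr 1
        simp [Matrix.trace, Matrix.diag, Fintype.sum_sum_type, Matrix.toBlocks₂₂, h00]
    have hcard : Fintype.card (Matrix (Fin 1) (Fin n) F) = Fintype.card F ^ n := by
      rw [Fintype.card_eq_nat_card]; simp [Matrix, Nat.card_fun]
    rw [h1, Finset.sum_product]
    simp only [AddChar.map_add_eq_mul, Finset.sum_const, card_univ]
    rw [hcard, nsmul_eq_mul, Finset.mul_sum]
    push_cast
    rw [Finset.mul_sum]
    exact Finset.sum_congr rfl fun i _ => by ring

private lemma recursion (hψ : ψ ≠ 1) (n : ℕ) :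
    ∑ A ∈ univ.filter (fun A : Matrix (Fin (n+1)) (Fin (n+1)) F => IsUnit A), ψ A.trace
    = -(Fintype.card F : ℂ) ^ n *
        ∑ D ∈ univ.filter (fun D : Matrix (Fin n) (Fin n) F => IsUnit D), ψ D.trace := by
  have e : (Fin 1 ⊕ Fin n) ≃ Fin (n + 1) := finSumFinEquiv.trans (finCongr (Nat.add_comm 1 n))
  rw [← sum_isUnit_reindex ψ e]
  rw [← Finset.sum_fiberwise
    (univ.filter (fun A : Matrix (Fin 1 ⊕ Fin n) (Fin 1 ⊕ Fin n) F => IsUnit A))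
    (fun A => (fun i => A i (Sum.inl 0))) (fun A => ψ A.trace)]
  simp only [Finset.filter_filter]
  have hfib : ∀ c : (Fin 1 ⊕ Fin n) → F,
      (∑ A ∈ univ.filter (fun A : Matrix (Fin 1 ⊕ Fin n) (Fin 1 ⊕ Fin n) F =>
          IsUnit A ∧ (fun i => A i (Sum.inl 0)) = c), ψ A.trace)
      = if c (Sum.inl 0) ≠ 0 ∧ ∀ j : Fin n, c (Sum.inr j) = 0 then
          ψ (c (Sum.inl 0)) * (Fintype.card F : ℂ) ^ n *
            ∑ D ∈ univ.filter (fun D : Matrix (Fin n) (Fin n) F => IsUnit D), ψ D.trace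
        else 0 := by
    intro c
    by_cases hz : ∀ j : Fin n, c (Sum.inr j) = 0
    · have hc : c = fun i => if i = Sum.inl 0 then c (Sum.inl 0) else 0 := by
        funext i
        cases i with
        | inl a =>
          have ha : a = 0 := Subsingleton.elim _ _
          subst ha; simp
        | inr a => simp [hz a]
      conv_lhs => rw [hc]
      rw [fiber_sum_scalar]
      by_cases h0 : c (Sum.inl 0) = 0
      · rw [if_pos h0, if_neg (by tauto)]
      · rw [if_neg h0, if_pos ⟨h0, hz⟩]
    · push_neg at hz
      obtain ⟨j, hj⟩ := hz
      rw [fiber_sum_zero ψ hψ c j hj, if_neg (by tauto)]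
  rw [Finset.sum_congr rfl fun c _ => hfib c]
  rw [Finset.sum_ite, Finset.sum_const_zero, add_zero]
  have hbij : ∑ c ∈ univ.filter (fun c : (Fin 1 ⊕ Fin n) → F =>
        c (Sum.inl 0) ≠ 0 ∧ ∀ j : Fin n, c (Sum.inr j) = 0),
      ψ (c (Sum.inl 0)) * (Fintype.card F : ℂ) ^ n *
        ∑ D ∈ univ.filter (fun D : Matrix (Fin n) (Fin n) F => IsUnit D), ψ D.trace
      = ∑ t ∈ univ.filter (fun t : F => t ≠ 0),
          ψ t * (Fintype.card F : ℂ) ^ n *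
        ∑ D ∈ univ.filter (fun D : Matrix (Fin n) (Fin n) F => IsUnit D), ψ D.trace := by
    refine Finset.sum_nbij' (fun c => c (Sum.inl 0))
      (fun t => fun i => if i = Sum.inl 0 then t else 0) ?_ ?_ ?_ ?_ ?_
    · intro c hc
      simp only [mem_filter, mem_univ, true_and] at hc ⊢
      exact hc.1
    · intro t ht
      simp only [mem_filter, mem_univ, true_and] at ht ⊢
      exact ⟨by simpa using ht, fun j => by simp⟩
    · intro c hc
      simp only [mem_filter, mem_univ, true_and] at hc
      funext i
      cases i with
      | inl a =>
        have ha : a = 0 := Subsingleton.elim _ _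
        subst ha; simp
      | inr a => simp [hc.2 a]
    · intro t _; simp
    · intro c _; simp
  rw [hbij]
  have hsum0 : ∑ t ∈ univ.filter (fun t : F => t ≠ 0), (ψ t : ℂ) = -1 := by
    have h := AddChar.sum_eq_zero_of_ne_one hψ
    have h2 := Finset.add_sum_erase univ (fun t : F => (ψ t : ℂ)) (mem_univ 0)
    rw [Finset.filter_ne' univ 0]
    simp only [AddChar.map_zero_eq_one, h] at h2
    linear_combination h2
  calc ∑ t ∈ univ.filter (fun t : F => t ≠ 0),
          ψ t * (Fintype.card F : ℂ) ^ n *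
            ∑ D ∈ univ.filter (fun D : Matrix (Fin n) (Fin n) F => IsUnit D), ψ D.trace
      = (∑ t ∈ univ.filter (fun t : F => t ≠ 0), (ψ t : ℂ)) *
          ((Fintype.card F : ℂ) ^ n *
            ∑ D ∈ univ.filter (fun D : Matrix (Fin n) (Fin n) F => IsUnit D), ψ D.trace) := by
        rw [Finset.sum_mul]
        exact Finset.sum_congr rfl fun t _ => by ring
    _ = -(Fintype.card F : ℂ) ^ n *
          ∑ D ∈ univ.filter (fun D : Matrix (Fin n) (Fin n) F => IsUnit D), ψ D.trace := by
        rw [hsum0]; ring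

private lemma key (hψ : ψ ≠ 1) : ∀ n : ℕ,
    ∑ A ∈ univ.filter (fun A : Matrix (Fin n) (Fin n) F => IsUnit A), ψ A.trace
      = (-1) ^ n * (Fintype.card F : ℂ) ^ (n.choose 2)
  | 0 => by
    have hall : ∀ A : Matrix (Fin 0) (Fin 0) F, IsUnit A := fun A => by
      rw [Matrix.isUnit_iff_isUnit_det, Matrix.det_fin_zero]; exact isUnit_one
    rw [Finset.filter_true_of_mem (fun A _ => hall A)]
    rw [Fintype.sum_subsingleton _ (0 : Matrix (Fin 0) (Fin 0) F)]; simp [Matrix.trace_fin_zero]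
  | n + 1 => by
    rw [recursion ψ hψ n, key hψ n]
    have h2 : (n + 1).choose 2 = n + n.choose 2 := by
      rw [Nat.choose_succ_succ, Nat.choose_one_right]
    rw [h2, pow_add, pow_succ]
    ring

end aux


/-- For a finite field `F` with `q` elements, `n ≥ 1`, and a non-trivial
additive character `ψ : F → ℂˣ`, the sum of `ψ(tr X)` over all invertible `n×n` matrices
`X` over `F` equals `(-1)ⁿ · q^{n(n-1)/2}`. -/
theorem sum_trace_character_GL
    (F : Type) [Field F] [Fintype F] [DecidableEq F] (n : ℕ) (hn : 0 < n)
    (ψ : AddChar F ℂ) (hψ : ψ ≠ 1) :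
    ∑ X : (Matrix (Fin n) (Fin n) F)ˣ,
        ψ (Matrix.trace (X : Matrix (Fin n) (Fin n) F))
      = (-1) ^ n * (Fintype.card F : ℂ) ^ (n * (n - 1) / 2) := by
  classical
  have h1 : ∑ X : (Matrix (Fin n) (Fin n) F)ˣ, ψ (Matrix.trace (X : Matrix (Fin n) (Fin n) F))
      = ∑ A ∈ univ.filter (fun A : Matrix (Fin n) (Fin n) F => IsUnit A), ψ A.trace := by
    refine Finset.sum_nbij' (fun X => (X : Matrix (Fin n) (Fin n) F))
      (fun A => if h : IsUnit A then h.unit else 1) ?_ ?_ ?_ ?_ ?_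
    · intro X _
      simp only [mem_filter, mem_univ, true_and]
      exact X.isUnit
    · intro A _; exact mem_univ _
    · intro X _
      show (if h : IsUnit (X : Matrix (Fin n) (Fin n) F) then h.unit else 1) = X
      rw [dif_pos X.isUnit]
      exact Units.ext X.isUnit.unit_spec
    · intro A hA
      simp only [mem_filter, mem_univ, true_and] at hA
      show ((if h : IsUnit A then h.unit else 1 : (Matrix (Fin n) (Fin n) F)ˣ) :
        Matrix (Fin n) (Fin n) F) = A
      rw [dif_pos hA]
      exact hA.unit_spec
    · intro X _; rfl
  rw [h1, key ψ hψ n, ← Nat.choose_two_right]
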